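/- Let α > 0 and λ > 0, and define the gamma hazard function h₀(x) = α·(αx)^(λ−1)·e^(−αx) / Γ(λ, αx) for x > 0, where Γ(λ,z) = ∫_z^∞ t^(λ−1)·e^(−t) dt is the upper incomplete gamma function; for τ > 0 define r(x,τ) = τ·h₀(τx)/h₀(x). Then for τ > 0: (0 ≤ r(x,τ) ≤ 1 for all x > 0) if and only if τ ≤ 1. -/

import Mathlib

open MeasureTheory

/-- The upper incomplete gamma function `Γ(λ, z) = ∫_z^∞ t^(λ−1)·e^(−t) dt`. -/
noncomputable def upperIncGamma (l z : ℝ) : ℝ :=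
  ∫ t in Set.Ioi z, t ^ (l - 1) * Real.exp (-t)

/-- The gamma hazard function `h₀(x) = α·(αx)^(λ−1)·e^(−αx)/Γ(λ, αx)`. -/
noncomputable def gammaHazard (α l x : ℝ) : ℝ :=
  α * (α * x) ^ (l - 1) * Real.exp (-(α * x)) / upperIncGamma l (α * x)

/-- Auxiliary: `K l z = ∫_1^∞ u^(l-1) e^(-z(u-1)) du`, so that
`Γ(l, z) = z^l e^(-z) K l z`. -/
noncomputable def auxK (l z : ℝ) : ℝ :=
  ∫ u in Set.Ioi (1 : ℝ), u ^ (l - 1) * Real.exp (-(z * (u - 1)))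

lemma auxK_integrableOn {l z : ℝ} (hl : 0 < l) (hz : 0 < z) :
    IntegrableOn (fun u : ℝ => u ^ (l - 1) * Real.exp (-(z * (u - 1)))) (Set.Ioi 1) := by
  have h0 : IntegrableOn (fun t : ℝ => Real.exp (-t) * t ^ (l - 1)) (Set.Ioi z) :=
    (Real.GammaIntegral_convergent hl).mono_set (Set.Ioi_subset_Ioi hz.le)
  have h1 : IntegrableOn (fun u : ℝ => Real.exp (-(z * u)) * (z * u) ^ (l - 1))
      (Set.Ioi 1) := by
    have := (integrableOn_Ioi_comp_mul_left_iff
      (fun t : ℝ => Real.exp (-t) * t ^ (l - 1)) 1 hz).mpr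
    simpa using this (by simpa using h0)
  have h2 : IntegrableOn (fun u : ℝ =>
      (z ^ (1 - l) * Real.exp z) * (Real.exp (-(z * u)) * (z * u) ^ (l - 1)))
      (Set.Ioi 1) := h1.const_mul _
  refine IntegrableOn.congr_fun h2 ?_ measurableSet_Ioi
  intro u hu
  have hu0 : (0 : ℝ) < u := lt_trans one_pos hu
  have hmul : (z * u) ^ (l - 1) = z ^ (l - 1) * u ^ (l - 1) :=
    Real.mul_rpow hz.le hu0.le
  have hzz : z ^ (1 - l) * z ^ (l - 1) = 1 := by
    rw [← Real.rpow_add hz]; norm_num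
  have hee : Real.exp z * Real.exp (-(z * u)) = Real.exp (-(z * (u - 1))) := by
    rw [← Real.exp_add]; ring_nf
  calc z ^ (1 - l) * Real.exp z * (Real.exp (-(z * u)) * (z * u) ^ (l - 1))
      = (z ^ (1 - l) * z ^ (l - 1)) * (Real.exp z * Real.exp (-(z * u))) * u ^ (l - 1) := by
        rw [hmul]; ring
    _ = u ^ (l - 1) * Real.exp (-(z * (u - 1))) := by rw [hzz, hee]; ring

lemma upperIncGamma_eq {l z : ℝ} (hl : 0 < l) (hz : 0 < z) :
    upperIncGamma l z = z ^ l * Real.exp (-z) * auxK l z := by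
  have hsub := integral_comp_mul_left_Ioi
    (fun t : ℝ => t ^ (l - 1) * Real.exp (-t)) 1 hz
  rw [mul_one] at hsub
  have hcong : (∫ u in Set.Ioi (1 : ℝ), (z * u) ^ (l - 1) * Real.exp (-(z * u)))
      = ∫ u in Set.Ioi (1 : ℝ),
        (z ^ (l - 1) * Real.exp (-z)) * (u ^ (l - 1) * Real.exp (-(z * (u - 1)))) := by
    refine setIntegral_congr_fun measurableSet_Ioi ?_
    intro u hu
    have hu0 : (0 : ℝ) < u := lt_trans one_pos hu
    have hmul : (z * u) ^ (l - 1) = z ^ (l - 1) * u ^ (l - 1) :=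
      Real.mul_rpow hz.le hu0.le
    have hee : Real.exp (-(z * u)) = Real.exp (-z) * Real.exp (-(z * (u - 1))) := by
      rw [← Real.exp_add]; ring_nf
    simp only [hmul, hee]; ring
  have hKdef : (∫ u in Set.Ioi (1 : ℝ),
        (z ^ (l - 1) * Real.exp (-z)) * (u ^ (l - 1) * Real.exp (-(z * (u - 1)))))
      = (z ^ (l - 1) * Real.exp (-z)) * auxK l z := by
    rw [auxK]; exact integral_const_mul _ _
  have hzl : z * z ^ (l - 1) = z ^ l := by
    nth_rewrite 1 [← Real.rpow_one z]
    rw [← Real.rpow_add hz]; ring_nf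
  have : upperIncGamma l z = z * ∫ u in Set.Ioi (1 : ℝ),
      (z * u) ^ (l - 1) * Real.exp (-(z * u)) := by
    rw [upperIncGamma]
    rw [show (∫ u in Set.Ioi (1:ℝ), (z * u) ^ (l - 1) * Real.exp (-(z * u)))
        = ∫ u in Set.Ioi (1:ℝ), (fun t : ℝ => t ^ (l - 1) * Real.exp (-t)) (z * u) from rfl,
      hsub]
    rw [smul_eq_mul, ← mul_assoc, mul_inv_cancel₀ hz.ne', one_mul]
  rw [this, hcong, hKdef, ← mul_assoc, ← mul_assoc, hzl]

lemma auxK_pos {l z : ℝ} (hl : 0 < l) (hz : 0 < z) : 0 < auxK l z := by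
  rw [auxK]
  rw [setIntegral_pos_iff_support_of_nonneg_ae]
  · refine lt_of_lt_of_le ?_ (measure_mono (show Set.Ioi (1:ℝ) ⊆ _ from ?_))
    · rw [Real.volume_Ioi]; exact ENNReal.zero_lt_top
    · intro u hu
      have hu0 : (0 : ℝ) < u := lt_trans one_pos hu
      refine ⟨?_, hu⟩
      simp only [Function.mem_support]
      positivity
  · filter_upwards [ae_restrict_mem measurableSet_Ioi] with u hu
    have hu0 : (0 : ℝ) < u := lt_trans one_pos hu
    positivity
  · exact auxK_integrableOn hl hz

lemma auxK_strict_anti {l z₁ z₂ : ℝ} (hl : 0 < l) (h1 : 0 < z₁) (h12 : z₁ < z₂) :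
    auxK l z₂ < auxK l z₁ := by
  have hi1 := auxK_integrableOn hl h1
  have hi2 := auxK_integrableOn hl (h1.trans h12)
  have hsub : 0 < auxK l z₁ - auxK l z₂ := by
    rw [auxK, auxK, ← integral_sub hi1 hi2]
    rw [setIntegral_pos_iff_support_of_nonneg_ae]
    · refine lt_of_lt_of_le ?_ (measure_mono (show Set.Ioi (1:ℝ) ⊆ _ from ?_))
      · rw [Real.volume_Ioi]; exact ENNReal.zero_lt_top
      · intro u hu
        have hu1 : (1 : ℝ) < u := Set.mem_Ioi.mp hu
        have hu0 : (0 : ℝ) < u := lt_trans one_pos hu1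
        refine ⟨?_, hu⟩
        simp only [Function.mem_support]
        have hup : 0 < u ^ (l - 1) := Real.rpow_pos_of_pos hu0 _
        have hexp : Real.exp (-(z₂ * (u - 1))) < Real.exp (-(z₁ * (u - 1))) := by
          apply Real.exp_lt_exp.2
          have hum : 0 < u - 1 := by linarith
          nlinarith
        have hpos : 0 < u ^ (l - 1) * Real.exp (-(z₁ * (u - 1)))
            - u ^ (l - 1) * Real.exp (-(z₂ * (u - 1))) := by nlinarith
        intro hcontra
        rw [hcontra] at hpos; exact lt_irrefl 0 hpos
    · filter_upwards [ae_restrict_mem measurableSet_Ioi] with u hu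
      have hu1 : (1 : ℝ) < u := Set.mem_Ioi.mp hu
      have hu0 : (0 : ℝ) < u := lt_trans one_pos hu1
      have hup : (0:ℝ) ≤ u ^ (l - 1) := Real.rpow_nonneg hu0.le _
      have hexp : Real.exp (-(z₂ * (u - 1))) ≤ Real.exp (-(z₁ * (u - 1))) := by
        apply Real.exp_le_exp.2
        have hum : (0:ℝ) ≤ u - 1 := by linarith
        nlinarith
      simp only [Pi.zero_apply]
      nlinarith
    · exact hi1.sub hi2
  linarith

lemma gammaHazard_eq {α l x : ℝ} (hα : 0 < α) (hl : 0 < l) (hx : 0 < x) :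
    gammaHazard α l x = 1 / (x * auxK l (α * x)) := by
  have hz : 0 < α * x := mul_pos hα hx
  have hK := auxK_pos hl hz
  rw [gammaHazard, upperIncGamma_eq hl hz]
  have hzl : (α * x) ^ l = (α * x) * (α * x) ^ (l - 1) := by
    nth_rewrite 2 [← Real.rpow_one (α * x)]
    rw [← Real.rpow_add hz]; ring_nf
  rw [hzl]
  have hp : (0:ℝ) < (α * x) ^ (l - 1) := Real.rpow_pos_of_pos hz _
  have he : (0:ℝ) < Real.exp (-(α * x)) := Real.exp_pos _
  field_simp

theorem gamma_r_le_one_iff (α l τ : ℝ) (hα : 0 < α) (hl : 0 < l) (hτ : 0 < τ) :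
    (∀ x > (0:ℝ),
        0 ≤ τ * gammaHazard α l (τ * x) / gammaHazard α l x ∧
        τ * gammaHazard α l (τ * x) / gammaHazard α l x ≤ 1) ↔
      τ ≤ 1 := by
  have key : ∀ x > (0:ℝ), τ * gammaHazard α l (τ * x) / gammaHazard α l x
      = auxK l (α * x) / auxK l (α * (τ * x)) := by
    intro x hx
    have htx : 0 < τ * x := mul_pos hτ hx
    have hK1 := auxK_pos hl (mul_pos hα hx)
    have hK2 := auxK_pos hl (mul_pos hα htx)
    rw [gammaHazard_eq hα hl hx, gammaHazard_eq hα hl htx]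
    field_simp
  constructor
  · intro h
    by_contra h1
    push_neg at h1
    obtain ⟨-, hle⟩ := h 1 one_pos
    rw [key 1 one_pos] at hle
    have hK2 := auxK_pos hl (mul_pos hα (mul_pos hτ one_pos))
    rw [div_le_one hK2] at hle
    have hlt : α * 1 < α * (τ * 1) := by nlinarith
    have := auxK_strict_anti hl (by linarith : (0:ℝ) < α * 1) hlt
    linarith
  · intro h1 x hx
    have htx : 0 < τ * x := mul_pos hτ hx
    have hK1 := auxK_pos hl (mul_pos hα hx)
    have hK2 := auxK_pos hl (mul_pos hα htx)
    rw [key x hx]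
    constructor
    · positivity
    · rw [div_le_one hK2]
      rcases eq_or_lt_of_le (show α * (τ * x) ≤ α * x by nlinarith [mul_nonneg hα.le (mul_nonneg (sub_nonneg.mpr h1) hx.le)]) with heq | hlt
      · rw [heq]
      · exact le_of_lt (auxK_strict_anti hl (mul_pos hα htx) hlt)
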